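/- Let $p$ be an odd prime, $g$ a conjugate of $f_p$ in $C_2 \wr S_{2p}$ commuting with $\sigma_1\sigma_2$, and suppose $g(1) = x$. Then $x \notin \{2,3,\ldots,p,\bar 2,\ldots,\bar p\}$; that is, $g$ must map $1$ into the set $\{1,\bar 1\} \cup \{1^*,\ldots,p^*,\overline{1^*},\ldots,\overline{p^*}\}$ (with $x^* = x+p$). -/

import Mathlib

/-!
STATEMENT 8: Let `p` be an odd prime and `g` a conjugate of `f_p` in `C₂ ≀ S_{2p}`
commuting with `σ₁σ₂`.  If `g(1) = x` then
`x ∉ {2,…,p, 2̄,…,p̄}`; i.e. `g` maps the point `1` into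
`{1,1̄} ∪ {1*,…,p*,1̄*,…,p̄*}`.

Setup as in Statement 7: ground set `(Fin 2 × Fin p) × Bool`, the point `1` is
`((0,0),false)`, the unstarred block is `{((0,i),ε)}`, and the conclusion says: if
`g` maps `1` into the unstarred block `j = 0` then it lands at position `0`
(i.e. on `1` or `1̄`).
-/

def barPerm (α : Type*) : Equiv.Perm (α × Bool) :=
  Function.Involutive.toPerm (fun x => (x.1, !x.2)) (by intro x; simp)

def rotBlocks (p : ℕ) : Equiv.Perm ((Fin 2 × Fin p) × Bool) :=
  Equiv.prodCongr (Equiv.prodCongr (Equiv.refl (Fin 2)) (finRotate p)) (Equiv.refl Bool)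

def fp (p : ℕ) : Equiv.Perm ((Fin 2 × Fin p) × Bool) :=
  Equiv.prodCongr (Equiv.prodCongr (Equiv.swap (0 : Fin 2) 1) (Equiv.refl (Fin p)))
    (Equiv.refl Bool)

theorem fp_sq (p : ℕ) : ∀ x, fp p (fp p x) = x := by
  rintro ⟨⟨a, b⟩, e⟩
  simp [fp, Equiv.swap_apply_self]

theorem fp_bar (p : ℕ) : ∀ x, fp p (barPerm (Fin 2 × Fin p) x) = barPerm _ (fp p x) := by
  rintro ⟨⟨a, b⟩, e⟩
  simp [fp, barPerm, Function.Involutive.toPerm]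

open Fin.NatCast in
theorem rot_pow (n m : ℕ) (a : Fin 2) (b : Fin (n+1)) (ε : Bool) :
    ((rotBlocks (n+1))^m) ((a, b), ε) = ((a, b + (m : Fin (n+1))), ε) := by
  induction m with
  | zero => simp
  | succ m ih =>
    rw [pow_succ', Equiv.Perm.mul_apply, ih]
    simp [rotBlocks, finRotate_succ_apply]
    exact add_assoc _ _ _

/-- A conjugate of `f_p` commuting with `σ₁σ₂` cannot map `1` to any of
`2,…,p,2̄,…,p̄`. -/
theorem image_of_one (p : ℕ) (hp : p.Prime) (hodd : Odd p)
    (g : Equiv.Perm ((Fin 2 × Fin p) × Bool))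
    (hconj : ∃ h ∈ Subgroup.centralizer {barPerm (Fin 2 × Fin p)},
      g = h⁻¹ * fp p * h)
    (hcomm : Commute g (rotBlocks p)) :
    (g ((0, ⟨0, hp.pos⟩), false)).1.1 = 0 →
      (g ((0, ⟨0, hp.pos⟩), false)).1.2 = ⟨0, hp.pos⟩ := by
  intro h0
  obtain ⟨h, hh, hg⟩ := hconj
  -- g is an involution
  have ginv : ∀ x, g (g x) = x := by
    intro x
    rw [hg]
    simp only [Equiv.Perm.mul_apply, Equiv.Perm.coe_inv, Equiv.symm_apply_apply, Equiv.apply_symm_apply]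
    rw [fp_sq]
    simp
  -- g commutes with barPerm
  have hcent : barPerm (Fin 2 × Fin p) * h = h * barPerm _ :=
    Subgroup.mem_centralizer_iff.mp hh _ rfl
  have hcent' : ∀ x, h (barPerm (Fin 2 × Fin p) x) = barPerm _ (h x) := by
    intro x
    have : (h * barPerm (Fin 2 × Fin p)) x = (barPerm (Fin 2 × Fin p) * h) x := by rw [hcent]
    simpa [Equiv.Perm.mul_apply] using this
  have hcentinv : ∀ x, h⁻¹ (barPerm (Fin 2 × Fin p) x) = barPerm _ (h⁻¹ x) := by
    intro x
    have := hcent' (h⁻¹ x)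
    simp only [Equiv.Perm.coe_inv, Equiv.apply_symm_apply] at this
    rw [← this]
    simp
  have gbar : ∀ x, g (barPerm (Fin 2 × Fin p) x) = barPerm _ (g x) := by
    intro x
    rw [hg]
    simp only [Equiv.Perm.mul_apply]
    rw [hcent', fp_bar, hcentinv]
  -- g commutes with powers of rot
  have grot : ∀ (m : ℕ) x, g ((rotBlocks p ^ m) x) = (rotBlocks p ^ m) (g x) := by
    intro m x
    have := (hcomm.pow_right m).eq
    calc g ((rotBlocks p ^ m) x) = (g * rotBlocks p ^ m) x := rfl
      _ = (rotBlocks p ^ m * g) x := by rw [this]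
      _ = (rotBlocks p ^ m) (g x) := rfl
  obtain ⟨n, rfl⟩ : ∃ n, p = n + 1 := ⟨p - 1, (Nat.succ_pred_eq_of_pos hp.pos).symm⟩
  set x0 : (Fin 2 × Fin (n+1)) × Bool := ((0, ⟨0, hp.pos⟩), false) with hx0
  set q := g x0 with hq
  set k : Fin (n+1) := q.1.2 with hk
  -- q = ((0, k), q.2)
  have hqeq : q = ((0, k), q.2) := by
    refine Prod.ext (Prod.ext ?_ rfl) rfl
    exact h0
  have hzero : (⟨0, hp.pos⟩ : Fin (n+1)) = 0 := rfl
  -- x0 = ((0,0),false), and rot^(k.val) x0 = ((0,k),false)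
  have hrotx0 : (rotBlocks (n+1) ^ k.val) x0 = ((0, k), false) := by
    rw [hx0, hzero, rot_pow]
    simp [Fin.cast_val_eq_self]
  -- compute g ((0,k), false)
  have hgf : g ((0, k), false) = (rotBlocks (n+1) ^ k.val) q := by
    rw [← hrotx0, grot, hq]
  have hfst : ((rotBlocks (n+1) ^ k.val) q).1.2 = k + k := by
    rw [hqeq, rot_pow]
    simp [Fin.cast_val_eq_self]
  -- now case on q.2
  have hkey : k + k = 0 := by
    have hgg : g q = x0 := by rw [hq]; exact ginv x0
    rcases hb : q.2 with _ | _
    · have : g ((0, k), false) = x0 := by rw [← hgg, hqeq, hb]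
      have := congrArg (fun z => z.1.2) this
      simp only [hgf] at this ⊢
      rw [hfst] at this
      simpa [hx0, hzero] using this
    · have hbar1 : ((0, k), true) = barPerm (Fin 2 × Fin (n+1)) ((0, k), false) := by
        simp [barPerm, Function.Involutive.toPerm]
      have : g ((0, k), true) = x0 := by rw [← hgg, hqeq, hb]
      rw [hbar1, gbar, hgf] at this
      have h2 : ((rotBlocks (n+1) ^ k.val) q).1.2 = (⟨0, hp.pos⟩ : Fin (n+1)) :=
        congrArg (fun z => z.1.2) this
      rw [hfst] at h2
      simpa [hzero] using h2
  -- conclude k = 0 from k + k = 0, p odd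
  have hmod : (k.val + k.val) % (n+1) = 0 := by
    have := congrArg Fin.val hkey
    rw [Fin.add_def] at this
    simpa using this
  have hval : ((n+1) : ℕ) ∣ 2 * k.val :=
    Nat.dvd_of_mod_eq_zero (by rw [two_mul]; exact hmod)
  rcases (Nat.Prime.dvd_mul hp).mp hval with h2 | hkv
  · exfalso
    have he : n + 1 = 2 := (Nat.prime_dvd_prime_iff_eq hp Nat.prime_two).mp h2
    rw [he] at hodd
    exact (by decide : ¬ Odd 2) hodd
  · have hk0 : k.val = 0 := Nat.eq_zero_of_dvd_of_lt hkv k.isLt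
    exact Fin.ext hk0
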